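/- Let C = (0,1)² be the open unit square in ℝ² and let 0 < c < c' < 1. Then there exist a constant α > 0 and n₀ ∈ ℕ, depending only on c and c', such that for every n ≥ n₀ and every integer k with cn ≤ k ≤ c'n there exists a set S ⊆ ℝ² with |S| = n and a_k(S) ≥ α·n². -/

import Mathlib

/-- The translate `x + C` of a set `C ⊆ ℝ²` by a vector `x`. -/
def translateSet (x : ℝ × ℝ) (C : Set (ℝ × ℝ)) : Set (ℝ × ℝ) :=
  (fun y => x + y) '' C

/-- The number `a_k(S)` of `T_C`-`k`-sets of a finite point set `S`: subsets `T ⊆ S` of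
size `k` with `T = S ∩ (x + C)` for some translate `x + C` whose boundary misses `S`. -/
noncomputable def aCount (C : Set (ℝ × ℝ)) (S : Finset (ℝ × ℝ)) (k : ℕ) : ℕ :=
  Set.ncard {T : Finset (ℝ × ℝ) | T ⊆ S ∧ T.card = k ∧ ∃ x : ℝ × ℝ,
    (↑S : Set (ℝ × ℝ)) ∩ frontier (translateSet x C) = ∅ ∧
    (↑T : Set (ℝ × ℝ)) = ↑S ∩ translateSet x C}

lemma translate_eq (x : ℝ × ℝ) :
    translateSet x (Set.Ioo (0:ℝ) 1 ×ˢ Set.Ioo (0:ℝ) 1) =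
      Set.Ioo x.1 (x.1+1) ×ˢ Set.Ioo x.2 (x.2+1) := by
  ext p
  simp only [translateSet, Set.mem_image, Set.mem_prod, Set.mem_Ioo, Prod.ext_iff]
  constructor
  · rintro ⟨c, ⟨⟨h1,h2⟩,⟨h3,h4⟩⟩, h5, h6⟩
    simp only [Prod.fst_add, Prod.snd_add] at h5 h6
    exact ⟨⟨by linarith, by linarith⟩, ⟨by linarith, by linarith⟩⟩
  · rintro ⟨⟨h1,h2⟩,⟨h3,h4⟩⟩
    refine ⟨(p.1 - x.1, p.2 - x.2), ⟨⟨?_, ?_⟩, ⟨?_, ?_⟩⟩, ?_, ?_⟩ <;> simp <;> linarith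

noncomputable def Csq : Set (ℝ × ℝ) := Set.Ioo (0:ℝ) 1 ×ˢ Set.Ioo (0:ℝ) 1

lemma mem_translate (x p : ℝ × ℝ) :
    p ∈ translateSet x Csq ↔
      (x.1 < p.1 ∧ p.1 < x.1 + 1) ∧ (x.2 < p.2 ∧ p.2 < x.2 + 1) := by
  rw [Csq, translate_eq]; simp [Set.mem_prod, Set.mem_Ioo]

lemma not_mem_frontier (x p : ℝ × ℝ) (h1 : p.1 ≠ x.1) (h2 : p.1 ≠ x.1 + 1)
    (h3 : p.2 ≠ x.2) (h4 : p.2 ≠ x.2 + 1) :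
    p ∉ frontier (translateSet x Csq) := by
  rw [Csq, translate_eq, frontier,
    (isOpen_Ioo.prod isOpen_Ioo).interior_eq, closure_prod_eq,
    closure_Ioo (by linarith : x.1 ≠ x.1+1), closure_Ioo (by linarith : x.2 ≠ x.2+1)]
  rintro ⟨hc, hn⟩
  simp only [Set.mem_prod, Set.mem_Icc] at hc
  exact hn ⟨⟨lt_of_le_of_ne hc.1.1 (Ne.symm h1), lt_of_le_of_ne hc.1.2 h2⟩,
    ⟨lt_of_le_of_ne hc.2.1 (Ne.symm h3), lt_of_le_of_ne hc.2.2 h4⟩⟩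

noncomputable def eps (h : ℕ) : ℝ := 1 / (20 * h)

lemma eps_pos {h : ℕ} (hh : 1 ≤ h) : 0 < eps h := by
  have : (1:ℝ) ≤ h := by exact_mod_cast hh
  unfold eps; positivity

lemma eps_lt {h : ℕ} (hh : 1 ≤ h) {a b : ℝ} : eps h * a < eps h * b ↔ a < b :=
  mul_lt_mul_iff_right₀ (eps_pos hh)

lemma eps_2h {h : ℕ} (hh : 1 ≤ h) : eps h * (2*(h:ℝ)) = 1/10 := by
  have h0 : (h:ℝ) ≠ 0 := by
    have : (1:ℝ) ≤ h := by exact_mod_cast hh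
    linarith
  unfold eps; field_simp; ring

lemma eps_small {h : ℕ} (hh : 1 ≤ h) {r : ℝ} (h0 : r ≤ 2*(h:ℝ)) : eps h * r ≤ 1/10 := by
  have := eps_pos hh
  calc eps h * r ≤ eps h * (2*(h:ℝ)) := by nlinarith
  _ = 1/10 := eps_2h hh

noncomputable def ptA (h i : ℕ) : ℝ × ℝ := (eps h * ((i:ℝ) + 1), eps h * (2 * (h:ℝ) - i))
noncomputable def ptBx (h i : ℕ) : ℝ × ℝ := (1 + eps h * ((i:ℝ) + 1/2), 1/2)
noncomputable def ptBy (h i : ℕ) : ℝ × ℝ := (1/2, 1 + eps h * ((i:ℝ) + 1/2))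
noncomputable def ptF (fi j : ℕ) : ℝ × ℝ := (1/4, 1/2 + ((j:ℝ)+1) / (4 * ((fi:ℝ)+1)))
noncomputable def ptO (j : ℕ) : ℝ × ℝ := (2 + (j:ℝ), 1/2)

noncomputable def wx (h s t : ℕ) : ℝ × ℝ := (eps h * s + eps h / 4, eps h * t + eps h / 4)

lemma a_pos {h : ℕ} (hh : 1 ≤ h) (s : ℕ) : 0 < eps h * s + eps h / 4 := by
  have e0 := eps_pos hh
  have : (0:ℝ) ≤ s := Nat.cast_nonneg s
  nlinarith

lemma a_lt {h s : ℕ} (hh : 1 ≤ h) (hs : s < h) : eps h * s + eps h / 4 < 1/10 := by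
  have e0 := eps_pos hh
  have h1 : (s:ℝ) < h := by exact_mod_cast hs
  have h2 : (1:ℝ) ≤ h := by exact_mod_cast hh
  have : eps h * ((s:ℝ) + 1/4) < eps h * (2*(h:ℝ)) := by
    rw [eps_lt hh]; linarith
  rw [eps_2h hh] at this; linarith

-- membership lemmas
lemma memA {h s t : ℕ} (hh : 1 ≤ h) (hs : s < h) (ht : t < h) {i : ℕ} (hi : i < 2*h) :
    ptA h i ∈ translateSet (wx h s t) Csq ↔ (s ≤ i ∧ i + t < 2*h) := by
  have e0 := eps_pos hh
  have has := a_lt hh hs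
  have hat := a_lt hh ht
  have hps := a_pos hh s
  have hpt := a_pos hh t
  have hicast : (i:ℝ) < 2*(h:ℝ) := by exact_mod_cast hi
  rw [mem_translate]
  unfold wx ptA
  simp only
  constructor
  · rintro ⟨⟨hx1, _⟩, ⟨hy1, _⟩⟩
    have hx : (s:ℝ) + 1/4 < (i:ℝ) + 1 := by
      rw [show eps h * (s:ℝ) + eps h/4 = eps h * ((s:ℝ)+1/4) by ring, eps_lt hh] at hx1
      exact hx1
    have hy : (t:ℝ) + 1/4 < 2*(h:ℝ) - i := by
      rw [show eps h * (t:ℝ) + eps h/4 = eps h * ((t:ℝ)+1/4) by ring, eps_lt hh] at hy1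
      exact hy1
    constructor
    · have : (s:ℝ) < (i:ℝ) + 1 := by linarith
      have h3 : s < i + 1 := by exact_mod_cast this
      omega
    · have : (i:ℝ) + (t:ℝ) < 2*(h:ℝ) := by linarith
      have : ((i + t : ℕ):ℝ) < ((2*h : ℕ):ℝ) := by push_cast; linarith
      exact_mod_cast this
  · rintro ⟨h1, h2⟩
    have hs1 : (s:ℝ) ≤ i := by exact_mod_cast h1
    have ht1 : (i:ℝ) + (t:ℝ) + 1 ≤ 2*(h:ℝ) := by
      have : ((i + t + 1 : ℕ):ℝ) ≤ ((2*h : ℕ):ℝ) := by exact_mod_cast h2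
      push_cast at this; linarith
    refine ⟨⟨?_, ?_⟩, ⟨?_, ?_⟩⟩
    · rw [show eps h * (s:ℝ) + eps h/4 = eps h * ((s:ℝ)+1/4) by ring, eps_lt hh]; linarith
    · have : eps h * ((i:ℝ)+1) ≤ 1/10 := eps_small hh (by linarith)
      linarith
    · rw [show eps h * (t:ℝ) + eps h/4 = eps h * ((t:ℝ)+1/4) by ring, eps_lt hh]; linarith
    · have : eps h * (2*(h:ℝ) - i) ≤ 1/10 := eps_small hh (by
        have : (0:ℝ) ≤ i := Nat.cast_nonneg i
        linarith)
      linarith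

lemma memBx {h s t : ℕ} (hh : 1 ≤ h) (hs : s < h) (ht : t < h) (i : ℕ) :
    ptBx h i ∈ translateSet (wx h s t) Csq ↔ i < s := by
  have e0 := eps_pos hh
  have has := a_lt hh hs
  have hat := a_lt hh ht
  have hps := a_pos hh s
  have hpt := a_pos hh t
  have hi0 : (0:ℝ) ≤ i := Nat.cast_nonneg i
  rw [mem_translate]
  unfold wx ptBx
  simp only
  constructor
  · rintro ⟨⟨_, hx2⟩, _⟩
    have : eps h * ((i:ℝ) + 1/2) < eps h * ((s:ℝ) + 1/4) := by
      rw [show eps h * (s:ℝ) + eps h/4 + 1 = eps h * ((s:ℝ)+1/4) + 1 by ring] at hx2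
      linarith
    rw [eps_lt hh] at this
    have : (i:ℝ) < s := by linarith
    exact_mod_cast this
  · intro hlt
    have h1 : (i:ℝ) + 1 ≤ s := by exact_mod_cast hlt
    refine ⟨⟨?_, ?_⟩, ⟨?_, ?_⟩⟩
    · nlinarith
    · have : eps h * ((i:ℝ) + 1/2) < eps h * ((s:ℝ) + 1/4) := by
        rw [eps_lt hh]; linarith
      linarith
    · linarith
    · linarith

lemma memBy {h s t : ℕ} (hh : 1 ≤ h) (hs : s < h) (ht : t < h) (i : ℕ) :
    ptBy h i ∈ translateSet (wx h s t) Csq ↔ i < t := by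
  have e0 := eps_pos hh
  have has := a_lt hh hs
  have hat := a_lt hh ht
  have hps := a_pos hh s
  have hpt := a_pos hh t
  have hi0 : (0:ℝ) ≤ i := Nat.cast_nonneg i
  rw [mem_translate]
  unfold wx ptBy
  simp only
  constructor
  · rintro ⟨_, ⟨_, hy2⟩⟩
    have : eps h * ((i:ℝ) + 1/2) < eps h * ((t:ℝ) + 1/4) := by
      rw [show eps h * (t:ℝ) + eps h/4 + 1 = eps h * ((t:ℝ)+1/4) + 1 by ring] at hy2
      linarith
    rw [eps_lt hh] at this
    have : (i:ℝ) < t := by linarith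
    exact_mod_cast this
  · intro hlt
    have h1 : (i:ℝ) + 1 ≤ t := by exact_mod_cast hlt
    refine ⟨⟨?_, ?_⟩, ⟨?_, ?_⟩⟩
    · linarith
    · linarith
    · nlinarith
    · have : eps h * ((i:ℝ) + 1/2) < eps h * ((t:ℝ) + 1/4) := by
        rw [eps_lt hh]; linarith
      linarith

lemma ptF_snd_bounds {fi j : ℕ} (hj : j < fi ∨ True) :
    1/2 < (ptF fi j).2 ∧ ((j:ℕ) < fi → (ptF fi j).2 ≤ 3/4) := by
  unfold ptF
  have d0 : (0:ℝ) < 4 * ((fi:ℝ)+1) := by positivity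
  constructor
  · have : (0:ℝ) < ((j:ℝ)+1) / (4 * ((fi:ℝ)+1)) := by positivity
    simp only; linarith
  · intro hjf
    have h1 : (j:ℝ) + 1 ≤ (fi:ℝ) + 1 := by
      have : (j:ℝ) ≤ fi := by exact_mod_cast hjf.le
      linarith
    have : ((j:ℝ)+1) / (4 * ((fi:ℝ)+1)) ≤ 1/4 := by
      rw [div_le_iff₀ d0]; linarith
    simp only; linarith

lemma memF {h s t fi : ℕ} (hh : 1 ≤ h) (hs : s < h) (ht : t < h) {j : ℕ} (hj : j < fi) :
    ptF fi j ∈ translateSet (wx h s t) Csq := by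
  have has := a_lt hh hs
  have hat := a_lt hh ht
  have hps := a_pos hh s
  have hpt := a_pos hh t
  obtain ⟨hb1, hb2⟩ := ptF_snd_bounds (fi := fi) (j := j) (Or.inr trivial)
  have hb2' := hb2 hj
  rw [mem_translate]
  unfold wx
  refine ⟨⟨?_, ?_⟩, ⟨?_, ?_⟩⟩
  · show eps h * s + eps h / 4 < (ptF fi j).1
    unfold ptF; simp only; linarith
  · show (ptF fi j).1 < eps h * s + eps h / 4 + 1
    unfold ptF; simp only; linarith
  · show eps h * t + eps h / 4 < (ptF fi j).2
    linarith
  · show (ptF fi j).2 < eps h * t + eps h / 4 + 1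
    linarith

lemma memO {h s t : ℕ} (hh : 1 ≤ h) (hs : s < h) (ht : t < h) (j : ℕ) :
    ptO j ∉ translateSet (wx h s t) Csq := by
  have has := a_lt hh hs
  have hj0 : (0:ℝ) ≤ j := Nat.cast_nonneg j
  rw [mem_translate]
  rintro ⟨⟨_, hx2⟩, _⟩
  unfold wx ptO at hx2
  simp only at hx2
  linarith

noncomputable local instance : DecidableEq (ℝ × ℝ) := Classical.decEq _

-- inequality helpers for frontier avoidance
lemma eps_ne {h : ℕ} (hh : 1 ≤ h) {a b : ℝ} (hab : a ≠ b) : eps h * a ≠ eps h * b :=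
  fun e => hab (mul_left_cancel₀ (eps_pos hh).ne' e)

lemma cast_ne_quarter (u v : ℕ) : (u:ℝ) ≠ (v:ℝ) + 1/4 := by
  intro e
  have h1 : (4*(u:ℝ)) = 4*(v:ℝ)+1 := by linarith
  have h2 : ((4*u : ℕ):ℝ) = ((4*v+1 : ℕ):ℝ) := by push_cast; linarith
  have h3 : 4*u = 4*v+1 := by exact_mod_cast h2
  omega

lemma half_ne_quarter (u v : ℕ) : (u:ℝ) + 1/2 ≠ (v:ℝ) + 1/4 := by
  intro e
  have h2 : ((4*u+2 : ℕ):ℝ) = ((4*v+1 : ℕ):ℝ) := by push_cast; linarith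
  have h3 : 4*u+2 = 4*v+1 := by exact_mod_cast h2
  omega

lemma sub_ne_quarter (h i v : ℕ) (hi : i < 2*h) : 2*(h:ℝ) - (i:ℝ) ≠ (v:ℝ) + 1/4 := by
  intro e
  have h2 : ((8*h : ℕ):ℝ) = ((4*i+4*v+1 : ℕ):ℝ) := by push_cast; linarith
  have h3 : 8*h = 4*i+4*v+1 := by exact_mod_cast h2
  omega

noncomputable def SS (h fi fo : ℕ) : Finset (ℝ × ℝ) :=
  (Finset.range (2*h)).image (ptA h) ∪ (Finset.range (2*h)).image (ptBx h) ∪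
  (Finset.range (2*h)).image (ptBy h) ∪ (Finset.range fi).image (ptF fi) ∪
  (Finset.range fo).image ptO

noncomputable def TT (h fi s t : ℕ) : Finset (ℝ × ℝ) :=
  (Finset.Ico s (2*h - t)).image (ptA h) ∪ (Finset.range s).image (ptBx h) ∪
  (Finset.range t).image (ptBy h) ∪ (Finset.range fi).image (ptF fi)

-- coordinate range lemmas
lemma ptA_fst_pos {h : ℕ} (hh : 1 ≤ h) (i : ℕ) : 0 < (ptA h i).1 := by
  have := eps_pos hh
  have : (0:ℝ) ≤ i := Nat.cast_nonneg i
  unfold ptA; simp only; nlinarith [eps_pos hh]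

lemma ptA_fst_le {h : ℕ} (hh : 1 ≤ h) {i : ℕ} (hi : i < 2*h) : (ptA h i).1 ≤ 1/10 := by
  unfold ptA; simp only
  apply eps_small hh
  have : (i:ℝ) + 1 ≤ 2*h := by
    have : ((i+1 : ℕ):ℝ) ≤ ((2*h : ℕ):ℝ) := by exact_mod_cast hi
    push_cast at this; linarith
  linarith

lemma ptA_snd_pos {h : ℕ} (hh : 1 ≤ h) {i : ℕ} (hi : i < 2*h) : 0 < (ptA h i).2 := by
  have e0 := eps_pos hh
  have : (i:ℝ) + 1 ≤ 2*h := by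
    have : ((i+1 : ℕ):ℝ) ≤ ((2*h : ℕ):ℝ) := by exact_mod_cast hi
    push_cast at this; linarith
  unfold ptA; simp only; nlinarith

lemma ptA_snd_le {h : ℕ} (hh : 1 ≤ h) (i : ℕ) : (ptA h i).2 ≤ 1/10 := by
  unfold ptA; simp only
  apply eps_small hh
  have : (0:ℝ) ≤ i := Nat.cast_nonneg i
  linarith

lemma ptBx_fst_gt {h : ℕ} (hh : 1 ≤ h) (i : ℕ) : 1 < (ptBx h i).1 := by
  have e0 := eps_pos hh
  have : (0:ℝ) ≤ i := Nat.cast_nonneg i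
  unfold ptBx; simp only; nlinarith

lemma ptBx_fst_le {h : ℕ} (hh : 1 ≤ h) {i : ℕ} (hi : i < 2*h) : (ptBx h i).1 ≤ 1 + 1/10 := by
  have : (i:ℝ) + 1/2 ≤ 2*h := by
    have : ((i+1 : ℕ):ℝ) ≤ ((2*h : ℕ):ℝ) := by exact_mod_cast hi
    push_cast at this; linarith
  have := eps_small hh this
  unfold ptBx; simp only; linarith

lemma ptBy_snd_gt {h : ℕ} (hh : 1 ≤ h) (i : ℕ) : 1 < (ptBy h i).2 := by
  have e0 := eps_pos hh
  have : (0:ℝ) ≤ i := Nat.cast_nonneg i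
  unfold ptBy; simp only; nlinarith

-- injectivity of point families
lemma injA {h : ℕ} (hh : 1 ≤ h) : Function.Injective (ptA h) := by
  intro i j e
  have e1 : eps h * ((i:ℝ)+1) = eps h * ((j:ℝ)+1) := congrArg Prod.fst e
  have e2 : (i:ℝ) + 1 = (j:ℝ) + 1 := mul_left_cancel₀ (eps_pos hh).ne' e1
  have : (i:ℝ) = j := by linarith
  exact_mod_cast this

lemma injBx {h : ℕ} (hh : 1 ≤ h) : Function.Injective (ptBx h) := by
  intro i j e
  have e1 : 1 + eps h * ((i:ℝ)+1/2) = 1 + eps h * ((j:ℝ)+1/2) := congrArg Prod.fst e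
  have e2 : (i:ℝ) + 1/2 = (j:ℝ) + 1/2 := mul_left_cancel₀ (eps_pos hh).ne' (by linarith)
  have : (i:ℝ) = j := by linarith
  exact_mod_cast this

lemma injBy {h : ℕ} (hh : 1 ≤ h) : Function.Injective (ptBy h) := by
  intro i j e
  have e1 : 1 + eps h * ((i:ℝ)+1/2) = 1 + eps h * ((j:ℝ)+1/2) := congrArg Prod.snd e
  have e2 : (i:ℝ) + 1/2 = (j:ℝ) + 1/2 := mul_left_cancel₀ (eps_pos hh).ne' (by linarith)
  have : (i:ℝ) = j := by linarith
  exact_mod_cast this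

lemma injF (fi : ℕ) : Function.Injective (ptF fi) := by
  intro i j e
  have e1 : 1/2 + ((i:ℝ)+1) / (4*((fi:ℝ)+1)) = 1/2 + ((j:ℝ)+1) / (4*((fi:ℝ)+1)) :=
    congrArg Prod.snd e
  have d0 : (0:ℝ) < 4*((fi:ℝ)+1) := by positivity
  have h2 : ((i:ℝ)+1) / (4*((fi:ℝ)+1)) = ((j:ℝ)+1) / (4*((fi:ℝ)+1)) := by linarith
  field_simp at h2
  have h3 : (i:ℝ) = j := by linarith
  exact_mod_cast h3

lemma injO : Function.Injective ptO := by
  intro i j e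
  have e1 : 2 + (i:ℝ) = 2 + (j:ℝ) := congrArg Prod.fst e
  have : (i:ℝ) = j := by linarith
  exact_mod_cast this

-- cross-family distinctness via coordinates
lemma A_ne_Bx {h : ℕ} (hh : 1 ≤ h) {i j : ℕ} (hi : i < 2*h) : ptA h i ≠ ptBx h j := by
  intro e
  have e1 : (ptA h i).1 = (ptBx h j).1 := congrArg Prod.fst e
  linarith [ptA_fst_le hh hi, ptBx_fst_gt hh j]

lemma A_ne_By {h : ℕ} (hh : 1 ≤ h) {i : ℕ} (j : ℕ) : ptA h i ≠ ptBy h j := by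
  intro e
  have e1 : (ptA h i).2 = (ptBy h j).2 := congrArg Prod.snd e
  linarith [ptA_snd_le hh i, ptBy_snd_gt hh j]

lemma A_ne_F {h fi : ℕ} (hh : 1 ≤ h) {i : ℕ} (hi : i < 2*h) (j : ℕ) : ptA h i ≠ ptF fi j := by
  intro e
  have e1 : (ptA h i).1 = (ptF fi j).1 := congrArg Prod.fst e
  have : (ptF fi j).1 = 1/4 := rfl
  linarith [ptA_fst_le hh hi]

lemma A_ne_O {h : ℕ} (hh : 1 ≤ h) {i : ℕ} (hi : i < 2*h) (j : ℕ) : ptA h i ≠ ptO j := by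
  intro e
  have e1 : (ptA h i).1 = (ptO j).1 := congrArg Prod.fst e
  have hj : (0:ℝ) ≤ j := Nat.cast_nonneg j
  have : (ptO j).1 = 2 + (j:ℝ) := rfl
  linarith [ptA_fst_le hh hi]

lemma Bx_ne_By {h : ℕ} (hh : 1 ≤ h) (i j : ℕ) : ptBx h i ≠ ptBy h j := by
  intro e
  have e1 : (ptBx h i).2 = (ptBy h j).2 := congrArg Prod.snd e
  have : (ptBx h i).2 = 1/2 := rfl
  linarith [ptBy_snd_gt hh j]

lemma Bx_ne_F {h fi : ℕ} (hh : 1 ≤ h) (i j : ℕ) : ptBx h i ≠ ptF fi j := by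
  intro e
  have e1 : (ptBx h i).1 = (ptF fi j).1 := congrArg Prod.fst e
  have : (ptF fi j).1 = 1/4 := rfl
  linarith [ptBx_fst_gt hh i]

lemma Bx_ne_O {h : ℕ} (hh : 1 ≤ h) {i : ℕ} (hi : i < 2*h) (j : ℕ) : ptBx h i ≠ ptO j := by
  intro e
  have e1 : (ptBx h i).1 = (ptO j).1 := congrArg Prod.fst e
  have hj : (0:ℝ) ≤ j := Nat.cast_nonneg j
  have : (ptO j).1 = 2 + (j:ℝ) := rfl
  linarith [ptBx_fst_le hh hi]

lemma By_ne_F {h fi : ℕ} (i j : ℕ) : ptBy h i ≠ ptF fi j := by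
  intro e
  have e1 : (ptBy h i).1 = (ptF fi j).1 := congrArg Prod.fst e
  have h1 : (ptBy h i).1 = 1/2 := rfl
  have h2 : (ptF fi j).1 = 1/4 := rfl
  rw [h1, h2] at e1; norm_num at e1

lemma By_ne_O {h : ℕ} (hh : 1 ≤ h) (i j : ℕ) : ptBy h i ≠ ptO j := by
  intro e
  have e1 : (ptBy h i).2 = (ptO j).2 := congrArg Prod.snd e
  have h2 : (ptO j).2 = 1/2 := rfl
  linarith [ptBy_snd_gt hh i]

lemma F_ne_O {fi : ℕ} (i j : ℕ) : ptF fi i ≠ ptO j := by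
  intro e
  have e1 : (ptF fi i).1 = (ptO j).1 := congrArg Prod.fst e
  have h1 : (ptF fi i).1 = 1/4 := rfl
  have h2 : (ptO j).1 = 2 + (j:ℝ) := rfl
  have hj : (0:ℝ) ≤ j := Nat.cast_nonneg j
  rw [h1, h2] at e1; linarith

lemma disj_images (f g : ℕ → ℝ × ℝ) (r q : Finset ℕ)
    (hne : ∀ i ∈ r, ∀ j ∈ q, f i ≠ g j) : Disjoint (r.image f) (q.image g) := by
  rw [Finset.disjoint_left]
  rintro p hp hq
  obtain ⟨i, hi, rfl⟩ := Finset.mem_image.mp hp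
  obtain ⟨j, hj, e⟩ := Finset.mem_image.mp hq
  exact hne i hi j hj e.symm

lemma card_SS {h fi fo : ℕ} (hh : 1 ≤ h) : (SS h fi fo).card = 6*h + fi + fo := by
  unfold SS
  rw [Finset.card_union_of_disjoint, Finset.card_union_of_disjoint,
    Finset.card_union_of_disjoint, Finset.card_union_of_disjoint]
  · rw [Finset.card_image_of_injective _ (injA hh), Finset.card_image_of_injective _ (injBx hh),
      Finset.card_image_of_injective _ (injBy hh), Finset.card_image_of_injective _ (injF fi),
      Finset.card_image_of_injective _ injO]
    simp [Finset.card_range]; ring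
  · exact disj_images _ _ _ _ fun i hi j hj =>
      A_ne_Bx hh (Finset.mem_range.mp hi)
  · apply Finset.disjoint_union_left.mpr
    exact ⟨disj_images _ _ _ _ fun i hi j hj => A_ne_By hh j,
      disj_images _ _ _ _ fun i hi j hj => Bx_ne_By hh i j⟩
  · apply Finset.disjoint_union_left.mpr
    refine ⟨Finset.disjoint_union_left.mpr ⟨?_, ?_⟩, ?_⟩
    · exact disj_images _ _ _ _ fun i hi j hj => A_ne_F hh (Finset.mem_range.mp hi) j
    · exact disj_images _ _ _ _ fun i hi j hj => Bx_ne_F hh i j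
    · exact disj_images _ _ _ _ fun i hi j hj => By_ne_F i j
  · apply Finset.disjoint_union_left.mpr
    refine ⟨Finset.disjoint_union_left.mpr ⟨Finset.disjoint_union_left.mpr ⟨?_, ?_⟩, ?_⟩, ?_⟩
    · exact disj_images _ _ _ _ fun i hi j hj => A_ne_O hh (Finset.mem_range.mp hi) j
    · exact disj_images _ _ _ _ fun i hi j hj => Bx_ne_O hh (Finset.mem_range.mp hi) j
    · exact disj_images _ _ _ _ fun i hi j hj => By_ne_O hh i j
    · exact disj_images _ _ _ _ fun i hi j hj => F_ne_O i j

lemma card_TT {h fi s t : ℕ} (hh : 1 ≤ h) (hs : s < h) (ht : t < h) :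
    (TT h fi s t).card = 2*h + fi := by
  unfold TT
  rw [Finset.card_union_of_disjoint, Finset.card_union_of_disjoint,
    Finset.card_union_of_disjoint]
  · rw [Finset.card_image_of_injective _ (injA hh), Finset.card_image_of_injective _ (injBx hh),
      Finset.card_image_of_injective _ (injBy hh), Finset.card_image_of_injective _ (injF fi)]
    rw [Nat.card_Ico]
    simp [Finset.card_range]
    omega
  · exact disj_images _ _ _ _ fun i hi j hj =>
      A_ne_Bx hh (by have := (Finset.mem_Ico.mp hi).2; omega)
  · apply Finset.disjoint_union_left.mpr
    exact ⟨disj_images _ _ _ _ fun i hi j hj => A_ne_By hh j,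
      disj_images _ _ _ _ fun i hi j hj => Bx_ne_By hh i j⟩
  · apply Finset.disjoint_union_left.mpr
    refine ⟨Finset.disjoint_union_left.mpr ⟨?_, ?_⟩, ?_⟩
    · exact disj_images _ _ _ _ fun i hi j hj =>
        A_ne_F hh (by have := (Finset.mem_Ico.mp hi).2; omega) j
    · exact disj_images _ _ _ _ fun i hi j hj => Bx_ne_F hh i j
    · exact disj_images _ _ _ _ fun i hi j hj => By_ne_F i j

lemma TT_subset {h fi fo s t : ℕ} (hs : s < h) (ht : t < h) :
    TT h fi s t ⊆ SS h fi fo := by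
  unfold TT SS
  intro p hp
  simp only [Finset.mem_union] at hp ⊢
  rcases hp with (((hp | hp) | hp) | hp)
  · refine Or.inl (Or.inl (Or.inl (Or.inl ?_)))
    obtain ⟨i, hi, rfl⟩ := Finset.mem_image.mp hp
    exact Finset.mem_image.mpr ⟨i, Finset.mem_range.mpr (by have := (Finset.mem_Ico.mp hi).2; omega), rfl⟩
  · refine Or.inl (Or.inl (Or.inl (Or.inr ?_)))
    obtain ⟨i, hi, rfl⟩ := Finset.mem_image.mp hp
    exact Finset.mem_image.mpr ⟨i, Finset.mem_range.mpr (by have := Finset.mem_range.mp hi; omega), rfl⟩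
  · refine Or.inl (Or.inl (Or.inr ?_))
    obtain ⟨i, hi, rfl⟩ := Finset.mem_image.mp hp
    exact Finset.mem_image.mpr ⟨i, Finset.mem_range.mpr (by have := Finset.mem_range.mp hi; omega), rfl⟩
  · exact Or.inl (Or.inr hp)

lemma coe_TT {h fi fo s t : ℕ} (hh : 1 ≤ h) (hs : s < h) (ht : t < h) :
    (↑(TT h fi s t) : Set (ℝ × ℝ)) = ↑(SS h fi fo) ∩ translateSet (wx h s t) Csq := by
  ext p
  simp only [Set.mem_inter_iff, Finset.coe_union, Set.mem_union, Finset.coe_image,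
    Set.mem_image, Finset.mem_coe, Finset.mem_range, Finset.mem_Ico, TT, SS]
  constructor
  · rintro (((⟨i, hi, rfl⟩ | ⟨i, hi, rfl⟩) | ⟨i, hi, rfl⟩) | ⟨j, hj, rfl⟩)
    · exact ⟨Or.inl (Or.inl (Or.inl (Or.inl ⟨i, by omega, rfl⟩))),
        (memA hh hs ht (by omega)).mpr ⟨hi.1, by omega⟩⟩
    · exact ⟨Or.inl (Or.inl (Or.inl (Or.inr ⟨i, by omega, rfl⟩))),
        (memBx hh hs ht i).mpr hi⟩
    · exact ⟨Or.inl (Or.inl (Or.inr ⟨i, by omega, rfl⟩)),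
        (memBy hh hs ht i).mpr hi⟩
    · exact ⟨Or.inl (Or.inr ⟨j, hj, rfl⟩), memF hh hs ht hj⟩
  · rintro ⟨((((⟨i, hi, rfl⟩ | ⟨i, hi, rfl⟩) | ⟨i, hi, rfl⟩) | ⟨j, hj, rfl⟩) | ⟨j, hj, rfl⟩), hw⟩
    · have := (memA hh hs ht hi).mp hw
      exact Or.inl (Or.inl (Or.inl ⟨i, ⟨this.1, by omega⟩, rfl⟩))
    · exact Or.inl (Or.inl (Or.inr ⟨i, (memBx hh hs ht i).mp hw, rfl⟩))
    · exact Or.inl (Or.inr ⟨i, (memBy hh hs ht i).mp hw, rfl⟩)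
    · exact Or.inr ⟨j, hj, rfl⟩
    · exact absurd hw (memO hh hs ht j)

lemma front_empty {h fi fo s t : ℕ} (hh : 1 ≤ h) (hs : s < h) (ht : t < h) :
    (↑(SS h fi fo) : Set (ℝ × ℝ)) ∩ frontier (translateSet (wx h s t) Csq) = ∅ := by
  have e0 := eps_pos hh
  have has := a_lt hh hs
  have hat := a_lt hh ht
  have hps := a_pos hh s
  have hpt := a_pos hh t
  apply Set.eq_empty_iff_forall_notMem.mpr
  rintro p ⟨hp, hf⟩
  simp only [SS, Finset.coe_union, Set.mem_union, Finset.coe_image, Set.mem_image,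
    Finset.mem_coe, Finset.mem_range] at hp
  have hwx1 : (wx h s t).1 = eps h * s + eps h / 4 := rfl
  have hwx2 : (wx h s t).2 = eps h * t + eps h / 4 := rfl
  rcases hp with ((((⟨i, hi, rfl⟩ | ⟨i, hi, rfl⟩) | ⟨i, hi, rfl⟩) | ⟨j, hj, rfl⟩) | ⟨j, hj, rfl⟩)
  · refine not_mem_frontier _ _ ?_ ?_ ?_ ?_ hf
    · show (ptA h i).1 ≠ eps h * s + eps h / 4
      unfold ptA; simp only
      rw [show eps h * (s:ℝ) + eps h/4 = eps h * ((s:ℝ)+1/4) by ring]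
      refine eps_ne hh ?_
      have : ((i:ℝ)+1) = (((i+1:ℕ)):ℝ) := by push_cast; ring
      rw [this]; exact cast_ne_quarter (i+1) s
    · show (ptA h i).1 ≠ eps h * s + eps h / 4 + 1
      have := ptA_fst_le hh hi
      intro e; rw [e] at this; linarith
    · show (ptA h i).2 ≠ eps h * t + eps h / 4
      unfold ptA; simp only
      rw [show eps h * (t:ℝ) + eps h/4 = eps h * ((t:ℝ)+1/4) by ring]
      exact eps_ne hh (sub_ne_quarter h i t hi)
    · show (ptA h i).2 ≠ eps h * t + eps h / 4 + 1
      have := ptA_snd_le hh i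
      intro e; rw [e] at this; linarith
  · refine not_mem_frontier _ _ ?_ ?_ ?_ ?_ hf
    · show (ptBx h i).1 ≠ eps h * s + eps h / 4
      have := ptBx_fst_gt hh i
      intro e; rw [e] at this; linarith
    · show (ptBx h i).1 ≠ eps h * s + eps h / 4 + 1
      unfold ptBx; simp only
      intro e
      have e2 : eps h * ((i:ℝ)+1/2) = eps h * ((s:ℝ)+1/4) := by linarith [e]
      exact eps_ne hh (half_ne_quarter i s) e2
    · show (ptBx h i).2 ≠ eps h * t + eps h / 4
      show (1:ℝ)/2 ≠ eps h * t + eps h / 4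
      intro e; linarith
    · show (ptBx h i).2 ≠ eps h * t + eps h / 4 + 1
      show (1:ℝ)/2 ≠ eps h * t + eps h / 4 + 1
      intro e; linarith
  · refine not_mem_frontier _ _ ?_ ?_ ?_ ?_ hf
    · show (ptBy h i).1 ≠ eps h * s + eps h / 4
      show (1:ℝ)/2 ≠ eps h * s + eps h / 4
      intro e; linarith
    · show (ptBy h i).1 ≠ eps h * s + eps h / 4 + 1
      show (1:ℝ)/2 ≠ eps h * s + eps h / 4 + 1
      intro e; linarith
    · show (ptBy h i).2 ≠ eps h * t + eps h / 4
      have := ptBy_snd_gt hh i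
      intro e; rw [e] at this; linarith
    · show (ptBy h i).2 ≠ eps h * t + eps h / 4 + 1
      unfold ptBy; simp only
      intro e
      have e2 : eps h * ((i:ℝ)+1/2) = eps h * ((t:ℝ)+1/4) := by linarith [e]
      exact eps_ne hh (half_ne_quarter i t) e2
  · obtain ⟨hb1, hb2⟩ := ptF_snd_bounds (fi := fi) (j := j) (Or.inr trivial)
    have hb2' := hb2 hj
    refine not_mem_frontier _ _ ?_ ?_ ?_ ?_ hf
    · show (ptF fi j).1 ≠ eps h * s + eps h / 4
      show (1:ℝ)/4 ≠ eps h * s + eps h / 4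
      intro e; linarith
    · show (ptF fi j).1 ≠ eps h * s + eps h / 4 + 1
      show (1:ℝ)/4 ≠ eps h * s + eps h / 4 + 1
      intro e; linarith
    · show (ptF fi j).2 ≠ eps h * t + eps h / 4
      intro e; linarith
    · show (ptF fi j).2 ≠ eps h * t + eps h / 4 + 1
      intro e; linarith
  · have hj0 : (0:ℝ) ≤ j := Nat.cast_nonneg j
    refine not_mem_frontier _ _ ?_ ?_ ?_ ?_ hf
    · show (ptO j).1 ≠ eps h * s + eps h / 4
      show 2 + (j:ℝ) ≠ eps h * s + eps h / 4
      intro e; linarith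
    · show (ptO j).1 ≠ eps h * s + eps h / 4 + 1
      show 2 + (j:ℝ) ≠ eps h * s + eps h / 4 + 1
      intro e; linarith
    · show (ptO j).2 ≠ eps h * t + eps h / 4
      show (1:ℝ)/2 ≠ eps h * t + eps h / 4
      intro e; linarith
    · show (ptO j).2 ≠ eps h * t + eps h / 4 + 1
      show (1:ℝ)/2 ≠ eps h * t + eps h / 4 + 1
      intro e; linarith

lemma ptA_mem_TT {h fi s t i : ℕ} (hi1 : s ≤ i) (hi2 : i < 2*h - t) : ptA h i ∈ TT h fi s t := by
  unfold TT
  exact Finset.mem_union_left _ (Finset.mem_union_left _ (Finset.mem_union_left _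
    (Finset.mem_image.mpr ⟨i, Finset.mem_Ico.mpr ⟨hi1, hi2⟩, rfl⟩)))

lemma TT_le {h fi : ℕ} (hh : 1 ≤ h) {s t s' t' : ℕ} (hs : s < h) (ht : t < h)
    (hs' : s' < h) (ht' : t' < h) (he : TT h fi s t = TT h fi s' t') :
    s' ≤ s ∧ t' ≤ t := by
  have m1 : ptA h s ∈ TT h fi s t := ptA_mem_TT le_rfl (by omega)
  have m2 : ptA h (2*h - t - 1) ∈ TT h fi s t := ptA_mem_TT (by omega) (by omega)
  rw [he] at m1 m2
  have c := coe_TT (h := h) (fi := fi) (fo := 0) (s := s') (t := t') hh hs' ht'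
  have w1 : ptA h s ∈ translateSet (wx h s' t') Csq := by
    have : ptA h s ∈ (↑(TT h fi s' t') : Set (ℝ × ℝ)) := m1
    rw [c] at this; exact this.2
  have w2 : ptA h (2*h - t - 1) ∈ translateSet (wx h s' t') Csq := by
    have : ptA h (2*h - t - 1) ∈ (↑(TT h fi s' t') : Set (ℝ × ℝ)) := m2
    rw [c] at this; exact this.2
  have a1 := (memA hh hs' ht' (show s < 2*h by omega)).mp w1
  have a2 := (memA hh hs' ht' (show 2*h - t - 1 < 2*h by omega)).mp w2
  exact ⟨a1.1, by omega⟩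

lemma main_count {h fi fo : ℕ} (hh : 1 ≤ h) :
    h * h ≤ aCount Csq (SS h fi fo) (2*h + fi) := by
  classical
  set T0 : Set (Finset (ℝ × ℝ)) := {T : Finset (ℝ × ℝ) | T ⊆ SS h fi fo ∧ T.card = 2*h+fi ∧
    ∃ x : ℝ × ℝ, (↑(SS h fi fo) : Set (ℝ × ℝ)) ∩ frontier (translateSet x Csq) = ∅ ∧
    (↑T : Set (ℝ × ℝ)) = ↑(SS h fi fo) ∩ translateSet x Csq} with hT0
  have hfin : T0.Finite :=
    Set.Finite.subset (Finset.finite_toSet ((SS h fi fo).powerset))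
      (fun T hT => by simpa [Finset.mem_powerset] using hT.1)
  set G : Set (ℕ × ℕ) := ↑(Finset.range h ×ˢ Finset.range h) with hG
  set F : ℕ × ℕ → Finset (ℝ × ℝ) := fun p => TT h fi p.1 p.2 with hF
  have hmemG : ∀ p : ℕ × ℕ, p ∈ G ↔ p.1 < h ∧ p.2 < h := by
    intro p
    simp [hG, Finset.mem_product]
  have himg : F '' G ⊆ T0 := by
    rintro T ⟨⟨s, t⟩, hst, rfl⟩
    obtain ⟨h1, h2⟩ := (hmemG _).mp hst
    exact ⟨TT_subset h1 h2, card_TT hh h1 h2,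
      wx h s t, front_empty hh h1 h2, coe_TT hh h1 h2⟩
  have hinj : Set.InjOn F G := by
    rintro ⟨s, t⟩ hst ⟨s', t'⟩ hst' he
    obtain ⟨h1, h2⟩ := (hmemG _).mp hst
    obtain ⟨h1', h2'⟩ := (hmemG _).mp hst'
    obtain ⟨l1, l2⟩ := TT_le hh h1 h2 h1' h2' he
    obtain ⟨l1', l2'⟩ := TT_le hh h1' h2' h1 h2 he.symm
    exact Prod.ext (by omega) (by omega)
  calc h * h = (Finset.range h ×ˢ Finset.range h).card := by
        rw [Finset.card_product]; simp
    _ = G.ncard := (Set.ncard_coe_finset _).symm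
    _ = (F '' G).ncard := (Set.ncard_image_of_injOn hinj).symm
    _ ≤ T0.ncard := Set.ncard_le_ncard himg hfin
    _ = aCount Csq (SS h fi fo) (2*h+fi) := rfl

theorem stmt12 (C : Set (ℝ × ℝ)) (hC : C = Set.Ioo (0 : ℝ) 1 ×ˢ Set.Ioo (0 : ℝ) 1)
    (c c' : ℝ) (hc : 0 < c) (hcc' : c < c') (hc' : c' < 1) :
    ∃ α : ℝ, 0 < α ∧ ∃ n₀ : ℕ, ∀ n : ℕ, n₀ ≤ n → ∀ k : ℕ,
      c * n ≤ (k : ℝ) → (k : ℝ) ≤ c' * n →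
      ∃ S : Finset (ℝ × ℝ), S.card = n ∧ α * (n : ℝ) ^ 2 ≤ (aCount C S k : ℝ) := by
  have hCsq : C = Csq := by rw [hC]; rfl
  subst hCsq
  set γ : ℝ := min c (1 - c') / 5 with hγdef
  have hmin : 0 < min c (1 - c') := lt_min hc (by linarith)
  have hγ0 : 0 < γ := by rw [hγdef]; positivity
  refine ⟨γ^2/4, by positivity, ⌈(2:ℝ)/γ⌉₊, ?_⟩
  intro n hn k hk1 hk2
  have hn2 : (2:ℝ) ≤ γ * n := by
    have h1 : (2:ℝ)/γ ≤ n := by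
      have := Nat.ceil_le.mp hn
      exact_mod_cast this
    calc (2:ℝ) = γ * (2/γ) := by field_simp
    _ ≤ γ * n := mul_le_mul_of_nonneg_left h1 hγ0.le
  set h : ℕ := ⌊γ * (n:ℝ)⌋₊ with hhdef
  have hn0 : (0:ℝ) ≤ n := Nat.cast_nonneg n
  have hfl : (h:ℝ) ≤ γ * n := Nat.floor_le (by positivity)
  have hfl2 : γ * n < (h:ℝ) + 1 := Nat.lt_floor_add_one _
  have hh1 : 1 ≤ h := Nat.le_floor (by push_cast; linarith)
  have hγc : γ ≤ c/5 := by
    have := min_le_left c (1-c')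
    rw [hγdef]; linarith
  have hγc' : γ ≤ (1-c')/5 := by
    have := min_le_right c (1-c')
    rw [hγdef]; linarith
  have m1 : γ*n ≤ ((1-c')/5)*n := mul_le_mul_of_nonneg_right hγc' hn0
  have m2 : ((1-c')/5)*(n:ℝ) = n/5 - c'*n/5 := by ring
  have m3 : c'*(n:ℝ) ≤ 1*n := mul_le_mul_of_nonneg_right (le_of_lt hc') hn0
  have m4 : γ*n ≤ (c/5)*n := mul_le_mul_of_nonneg_right hγc hn0
  have m5 : (c/5)*(n:ℝ) = c*n/5 := by ring
  have h2k : 2*h ≤ k := by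
    have hr : ((2*h : ℕ) : ℝ) ≤ (k:ℝ) := by push_cast; linarith
    exact_mod_cast hr
  have h4k : 4*h + k ≤ n := by
    have hr : ((4*h : ℕ) : ℝ) + k ≤ (n:ℝ) := by push_cast; linarith
    exact_mod_cast hr
  refine ⟨SS h (k - 2*h) (n - k - 4*h), ?_, ?_⟩
  · rw [card_SS hh1]; omega
  · have hcount := main_count (h := h) (fi := k - 2*h) (fo := n - k - 4*h) hh1
    have hk' : 2*h + (k - 2*h) = k := by omega
    rw [hk'] at hcount
    have hge : γ*n/2 ≤ (h:ℝ) := by linarith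
    have h0 : 0 ≤ γ*n/2 := by positivity
    calc γ^2/4 * (n:ℝ)^2 = (γ*n/2)^2 := by ring
    _ ≤ (h:ℝ)^2 := by
      have := pow_le_pow_left₀ h0 hge 2
      simpa using this
    _ = ((h*h : ℕ):ℝ) := by push_cast; ring
    _ ≤ _ := by exact_mod_cast hcount
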